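/- Let A be an n×n quaternion matrix with group inverse X and Moore–Penrose inverse Y, and let Y₂ be a Moore–Penrose inverse of A². Then X·A·Y = A·Y₂ and Y·A·X = Y₂·A; that is, when Ind A ≤ 1 the right core inverse equals A(A²)† and the left core inverse equals (A²)†A. -/
import Mathlib


/-- For a quaternion group matrix `A` (with group inverse `X`, Moore–Penrose
inverse `Y`, and `Y₂` a Moore–Penrose inverse of `A²`) the right core inverse
equals `A·(A²)†` and the left core inverse equals `(A²)†·A`. -/
theorem core_inverse_simple_rep {n : ℕ}
    (A X Y Y₂ : Matrix (Fin n) (Fin n) (Quaternion ℝ))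
    (hX1 : A * X * A = A) (hX2 : X * A * X = X) (hX3 : A * X = X * A)
    (hY1 : A * Y * A = A) (hY2 : Y * A * Y = Y)
    (hY3 : (A * Y).conjTranspose = A * Y) (hY4 : (Y * A).conjTranspose = Y * A)
    (hY₂1 : A ^ 2 * Y₂ * A ^ 2 = A ^ 2) (hY₂2 : Y₂ * A ^ 2 * Y₂ = Y₂)
    (hY₂3 : (A ^ 2 * Y₂).conjTranspose = A ^ 2 * Y₂)
    (hY₂4 : (Y₂ * A ^ 2).conjTranspose = Y₂ * A ^ 2) :
    X * A * Y = A * Y₂ ∧ Y * A * X = Y₂ * A := by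
  have hsq : A ^ 2 = A * A := sq A
  -- A = A² * X and A = X * A²
  have hA2X : A ^ 2 * X = A := by
    rw [hsq, mul_assoc, hX3, ← mul_assoc, hX1]
  have hXA2 : X * A ^ 2 = A := by
    rw [hsq, ← mul_assoc, ← hX3, hX1]
  -- P = A*Y and Q = A²*Y₂ are hermitian idempotents with the same range
  have hPQ : (A * Y) * (A ^ 2 * Y₂) = A ^ 2 * Y₂ := by
    rw [hsq, ← mul_assoc, ← mul_assoc, hY1, ← hsq]
  have hQP : (A ^ 2 * Y₂) * (A * Y) = A * Y := by
    calc (A ^ 2 * Y₂) * (A * Y) = (A ^ 2 * Y₂) * ((A ^ 2 * X) * Y) := by rw [hA2X]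
      _ = (A ^ 2 * Y₂ * A ^ 2) * (X * Y) := by noncomm_ring
      _ = (A ^ 2 * X) * Y := by rw [hY₂1]; noncomm_ring
      _ = A * Y := by rw [hA2X]
  have key : A * Y = A ^ 2 * Y₂ := by
    have h := congrArg Matrix.conjTranspose hPQ
    rw [Matrix.conjTranspose_mul, hY3, hY₂3] at h
    rw [← hQP]; exact h
  -- P' = Y*A and Q' = Y₂*A² are hermitian idempotents with the same corange
  have hQP' : (Y₂ * A ^ 2) * (Y * A) = Y₂ * A ^ 2 := by
    have : A ^ 2 * Y * A = A ^ 2 := by rw [hsq, mul_assoc A A Y, mul_assoc, hY1, ← hsq]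
    calc (Y₂ * A ^ 2) * (Y * A) = Y₂ * (A ^ 2 * Y * A) := by noncomm_ring
      _ = Y₂ * A ^ 2 := by rw [this]
  have hPQ' : (Y * A) * (Y₂ * A ^ 2) = Y * A := by
    calc (Y * A) * (Y₂ * A ^ 2) = (Y * (X * A ^ 2)) * (Y₂ * A ^ 2) := by rw [hXA2]
      _ = Y * X * (A ^ 2 * Y₂ * A ^ 2) := by noncomm_ring
      _ = Y * (X * A ^ 2) := by rw [hY₂1]; noncomm_ring
      _ = Y * A := by rw [hXA2]
  have key' : Y * A = Y₂ * A ^ 2 := by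
    have h := congrArg Matrix.conjTranspose hQP'
    rw [Matrix.conjTranspose_mul, hY4, hY₂4] at h
    rw [← hPQ']; exact h
  constructor
  · rw [mul_assoc, key, ← mul_assoc, hXA2]
  · rw [key', mul_assoc, hA2X]
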